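/- Every finite simple graph G with at least one vertex admits a weak orientation w such that 2·Δ_w⁺(G) ≤ mad(G); consequently the minimum of 2·Δ_w⁺(G) over all weak orientations w of G equals mad(G). -/

import Mathlib

/-- The `p`-th power of a graph: vertices are adjacent iff distinct and at distance at most `p`. -/
def graphPow {V : Type*} (G : SimpleGraph V) (p : ℕ) : SimpleGraph V where
  Adj x y := x ≠ y ∧ G.Reachable x y ∧ G.dist x y ≤ p
  symm := by
    constructor
    rintro x y ⟨hxy, hr, hd⟩
    exact ⟨hxy.symm, hr.symm, by rwa [SimpleGraph.dist_comm]⟩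
  loopless := by constructor; rintro x ⟨h, -⟩; exact h rfl

/-- Maximum average degree: max over nonempty subgraphs of 2|E(H)|/|V(H)|. -/
noncomputable def mad {V : Type*} (G : SimpleGraph V) : ℝ :=
  sSup { x : ℝ | ∃ H : G.Subgraph, H.verts.Nonempty ∧
    x = 2 * H.edgeSet.ncard / H.verts.ncard }

/-- Coloring number: min over linear orders (injections into ℕ) of max back-closed-neighborhood size. -/
noncomputable def col {V : Type*} [Fintype V] (G : SimpleGraph V) : ℕ :=
  sInf { n : ℕ | ∃ σ : V ↪ ℕ,
    ∀ x : V, ({ y : V | σ y ≤ σ x ∧ (y = x ∨ G.Adj x y) }).ncard ≤ n }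

/-- Weak `k`-coloring number. -/
noncomputable def wcol {V : Type*} [Fintype V] (G : SimpleGraph V) (k : ℕ) : ℕ :=
  sInf { n : ℕ | ∃ σ : V ↪ ℕ, ∀ x : V,
    ({ y : V | σ y ≤ σ x ∧ ∃ P : G.Walk x y, P.length ≤ k ∧
        ∀ z ∈ P.support, σ y ≤ σ z }).ncard ≤ n }

/-- Arboricity: the minimum number of forests needed to cover all edges of `G`. -/
noncomputable def arb {V : Type*} (G : SimpleGraph V) : ℕ :=
  sInf { n : ℕ | ∃ f : Fin n → SimpleGraph V, (∀ i, (f i).IsAcyclic ∧ f i ≤ G) ∧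
    ∀ e ∈ G.edgeSet, ∃ i, e ∈ (f i).edgeSet }

/-- Out-weight of a vertex under a weighting of edge orientations. -/
def outWeight {V : Type*} [Fintype V] (G : SimpleGraph V) [DecidableRel G.Adj]
    (w : V → V → ℝ) (u : V) : ℝ :=
  ∑ v ∈ G.neighborFinset u, w u v

/-- `w` is a weak orientation of `G`. -/
def IsWeakOrientation {V : Type*} (G : SimpleGraph V) (w : V → V → ℝ) : Prop :=
  ∀ u v, G.Adj u v → 0 ≤ w u v ∧ w u v + w v u = 1

/-- Maximum out-weight. -/
noncomputable def maxOutWeight {V : Type*} [Fintype V] [Nonempty V] (G : SimpleGraph V)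
    [DecidableRel G.Adj] (w : V → V → ℝ) : ℝ :=
  Finset.univ.sup' Finset.univ_nonempty (outWeight G w)


open Finset

set_option linter.unusedSectionVars false
section aux
variable {V : Type*} [Fintype V] [DecidableEq V]

def pairsF (G' : SimpleGraph V) [DecidableRel G'.Adj] : Finset (V × V) :=
  Finset.univ.filter fun p => G'.Adj p.1 p.2

lemma sum_pairsF {M : Type*} [AddCommMonoid M] (G' : SimpleGraph V) [DecidableRel G'.Adj]
    (f : V → V → M) :
    ∑ p ∈ pairsF G', f p.1 p.2 = ∑ u, ∑ v ∈ Finset.univ.filter (G'.Adj u), f u v := by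
  rw [pairsF, ← Finset.univ_product_univ, Finset.sum_filter, Finset.sum_product]
  simp [Finset.sum_filter]

lemma pairsF_card (G' : SimpleGraph V) [DecidableRel G'.Adj] :
    (pairsF G').card = 2 * G'.edgeFinset.card := by
  have h1 : ((pairsF G').card : ℕ) = ∑ u, (G'.neighborFinset u).card := by
    rw [Finset.card_eq_sum_ones, sum_pairsF G' (fun _ _ => (1:ℕ))]
    congr 1; ext u
    rw [SimpleGraph.neighborFinset_eq_filter, Finset.card_eq_sum_ones]
  rw [h1]
  exact G'.sum_degrees_eq_twice_card_edges

lemma sum_pairsF_one (G' : SimpleGraph V) [DecidableRel G'.Adj]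
    (w : V → V → ℝ) (hw : ∀ u v, G'.Adj u v → w u v + w v u = 1) :
    ∑ p ∈ pairsF G', w p.1 p.2 = (G'.edgeFinset.card : ℝ) := by
  have hswap : ∑ p ∈ pairsF G', w p.1 p.2 = ∑ p ∈ pairsF G', w p.2 p.1 := by
    apply Finset.sum_nbij' (fun p => p.swap) (fun p => p.swap) <;>
      simp [pairsF, SimpleGraph.adj_comm]
  have h2 : ∑ p ∈ pairsF G', (w p.1 p.2 + w p.2 p.1) = ((pairsF G').card : ℝ) := by
    rw [Finset.sum_congr rfl (fun p hp => hw p.1 p.2 (by simpa [pairsF] using hp))]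
    simp
  rw [Finset.sum_add_distrib, ← hswap, pairsF_card] at h2
  push_cast at h2
  linarith

end aux

section mad
variable {V : Type*} [Fintype V]

lemma madSet_nonempty (G : SimpleGraph V) [Nonempty V] :
    Set.Nonempty { x : ℝ | ∃ H : G.Subgraph, H.verts.Nonempty ∧
      x = 2 * H.edgeSet.ncard / H.verts.ncard } :=
  ⟨_, ⟨⊤, by simp [Set.univ_nonempty], rfl⟩⟩

lemma madSet_bddAbove (G : SimpleGraph V) :
    BddAbove { x : ℝ | ∃ H : G.Subgraph, H.verts.Nonempty ∧
      x = 2 * H.edgeSet.ncard / H.verts.ncard } := by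
  refine ⟨2 * (G.edgeSet.ncard : ℝ), ?_⟩
  rintro x ⟨H, hne, rfl⟩
  have hv : 1 ≤ (H.verts.ncard : ℝ) := by
    have : 0 < H.verts.ncard := by
      rw [Set.ncard_pos (H.verts.toFinite)]; exact hne
    exact_mod_cast this
  have he : (H.edgeSet.ncard : ℝ) ≤ (G.edgeSet.ncard : ℝ) := by
    exact_mod_cast Set.ncard_le_ncard H.edgeSet_subset (G.edgeSet.toFinite)
  calc 2 * (H.edgeSet.ncard : ℝ) / H.verts.ncard ≤ 2 * (H.edgeSet.ncard : ℝ) := by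
        apply div_le_self (by positivity) hv
    _ ≤ 2 * (G.edgeSet.ncard : ℝ) := by linarith

lemma le_mad (G : SimpleGraph V) {H : G.Subgraph} (hne : H.verts.Nonempty) :
    2 * (H.edgeSet.ncard : ℝ) / H.verts.ncard ≤ mad G :=
  le_csSup (madSet_bddAbove G) ⟨H, hne, rfl⟩

lemma mad_le (G : SimpleGraph V) [Nonempty V] [DecidableRel G.Adj] {w : V → V → ℝ}
    (hw : IsWeakOrientation G w) : mad G ≤ 2 * maxOutWeight G w := by
  classical
  apply csSup_le (madSet_nonempty G)
  rintro x ⟨H, hne, rfl⟩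
  set GH := H.spanningCoe with hGH
  haveI : DecidableRel GH.Adj := Classical.decRel _
  have hadj : ∀ u v, GH.Adj u v → G.Adj u v := fun u v h => h.adj_sub
  have hEeq : GH.edgeSet = H.edgeSet := by
    ext e; induction e with
    | _ u v =>
      rw [SimpleGraph.mem_edgeSet, SimpleGraph.Subgraph.mem_edgeSet,
        SimpleGraph.Subgraph.spanningCoe_adj]
  have hecard : (H.edgeSet.ncard : ℝ) = (GH.edgeFinset.card : ℝ) := by
    rw [← hEeq, Set.ncard_eq_toFinset_card' GH.edgeSet, SimpleGraph.edgeFinset]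
  have hsum : (GH.edgeFinset.card : ℝ) = ∑ p ∈ pairsF GH, w p.1 p.2 :=
    (sum_pairsF_one GH w (fun u v h => (hw u v (hadj u v h)).2)).symm
  have hstep : ∑ p ∈ pairsF GH, w p.1 p.2 ≤ ∑ u ∈ H.verts.toFinset, outWeight G w u := by
    rw [sum_pairsF]
    rw [← Finset.sum_subset (Finset.subset_univ H.verts.toFinset)
      (fun u _ hu => Finset.sum_eq_zero (fun v hv => by
        exfalso
        have h2 := (Finset.mem_filter.1 hv).2
        rw [SimpleGraph.Subgraph.spanningCoe_adj] at h2
        exact hu (Set.mem_toFinset.2 h2.fst_mem)))]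
    apply Finset.sum_le_sum
    intro u _
    apply Finset.sum_le_sum_of_subset_of_nonneg
    · intro v hv
      rw [SimpleGraph.neighborFinset_eq_filter, Finset.mem_filter]
      exact ⟨Finset.mem_univ v, hadj u v (Finset.mem_filter.1 hv).2⟩
    · intro v hv _
      rw [SimpleGraph.neighborFinset_eq_filter, Finset.mem_filter] at hv
      exact (hw u v hv.2).1
  have hbound : ∑ u ∈ H.verts.toFinset, outWeight G w u
      ≤ (H.verts.ncard : ℝ) * maxOutWeight G w := by
    rw [Set.ncard_eq_toFinset_card' H.verts]
    calc ∑ u ∈ H.verts.toFinset, outWeight G w u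
        ≤ H.verts.toFinset.card • maxOutWeight G w :=
          Finset.sum_le_card_nsmul _ _ _
            (fun u _ => Finset.le_sup' (outWeight G w) (Finset.mem_univ u))
      _ = (H.verts.toFinset.card : ℝ) * maxOutWeight G w := by
          rw [nsmul_eq_mul]
  have hv : (0:ℝ) < H.verts.ncard := by
    have : 0 < H.verts.ncard := by rw [Set.ncard_pos (H.verts.toFinite)]; exact hne
    exact_mod_cast this
  rw [div_le_iff₀ hv]
  have hE : (H.edgeSet.ncard : ℝ) ≤ (H.verts.ncard : ℝ) * maxOutWeight G w := by
    rw [hecard]; linarith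
  nlinarith
end mad

section exist
variable {V : Type*} [Fintype V] [Nonempty V]

def Kset (G : SimpleGraph V) : Set (V → V → ℝ) :=
  {w | (∀ u v, G.Adj u v → 0 ≤ w u v ∧ w u v + w v u = 1) ∧ ∀ u v, ¬ G.Adj u v → w u v = 0}

lemma Kset_nonempty (G : SimpleGraph V) [DecidableRel G.Adj] : (Kset G).Nonempty := by
  refine ⟨fun u v => if G.Adj u v then 1/2 else 0, ?_, ?_⟩
  · intro u v h
    simp only [if_pos h, if_pos h.symm]
    norm_num
  · intro u v h
    simp only [if_neg h]

lemma continuous_sup' {α : Type*} [TopologicalSpace α] {ι : Type*} {s : Finset ι}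
    (hs : s.Nonempty) (f : ι → α → ℝ) (hf : ∀ i, Continuous (f i)) :
    Continuous (fun x => s.sup' hs (fun i => f i x)) := by
  induction hs using Finset.Nonempty.cons_induction with
  | singleton a =>
    have h1 : (fun x => ({a} : Finset ι).sup' (Finset.singleton_nonempty a) (fun i => f i x))
        = f a := funext fun x => Finset.sup'_singleton _
    rw [h1]; exact hf a
  | cons a s ha hs ih =>
    have h1 : (fun x => (Finset.cons a s ha).sup' (Finset.cons_nonempty ha) (fun i => f i x))
        = fun x => (f a x) ⊔ (s.sup' hs (fun i => f i x)) :=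
      funext fun x => Finset.sup'_cons hs _
    rw [h1]; exact (hf a).max ih

lemma continuous_maxOutWeight (G : SimpleGraph V) [DecidableRel G.Adj] :
    Continuous (fun w : V → V → ℝ => maxOutWeight G w) := by
  apply continuous_sup'
  intro u
  unfold outWeight
  apply continuous_finset_sum
  intro v _
  exact (continuous_apply v).comp (continuous_apply u)

lemma Kset_isCompact (G : SimpleGraph V) [DecidableRel G.Adj] : IsCompact (Kset G) := by
  have hc : ∀ (a b : V), Continuous (fun w : V → V → ℝ => w a b) :=
    fun a b => (continuous_apply b).comp (continuous_apply a)
  have hclosed : IsClosed (Kset G) := by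
    have hKeq : Kset G =
        (⋂ (p : V × V), {w : V → V → ℝ |
          G.Adj p.1 p.2 → 0 ≤ w p.1 p.2 ∧ w p.1 p.2 + w p.2 p.1 = 1}) ∩
        (⋂ (p : V × V), {w : V → V → ℝ | ¬ G.Adj p.1 p.2 → w p.1 p.2 = 0}) := by
      ext w
      simp only [Kset, Set.mem_setOf_eq, Set.mem_inter_iff, Set.mem_iInter, Prod.forall]
    rw [hKeq]
    apply IsClosed.inter <;> (apply isClosed_iInter; intro p)
    · by_cases h : G.Adj p.1 p.2
      · have : {w : V → V → ℝ | G.Adj p.1 p.2 → 0 ≤ w p.1 p.2 ∧ w p.1 p.2 + w p.2 p.1 = 1}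
            = {w : V → V → ℝ | 0 ≤ w p.1 p.2} ∩ {w | w p.1 p.2 + w p.2 p.1 = 1} := by
          ext w; simp [h]
        rw [this]
        exact (isClosed_le continuous_const (hc _ _)).inter
          (isClosed_eq ((hc _ _).add (hc _ _)) continuous_const)
      · have : {w : V → V → ℝ | G.Adj p.1 p.2 → 0 ≤ w p.1 p.2 ∧ w p.1 p.2 + w p.2 p.1 = 1}
            = Set.univ := by ext w; simp [h]
        rw [this]; exact isClosed_univ
    · by_cases h : G.Adj p.1 p.2
      · have : {w : V → V → ℝ | ¬ G.Adj p.1 p.2 → w p.1 p.2 = 0} = Set.univ := by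
          ext w; simp [h]
        rw [this]; exact isClosed_univ
      · have : {w : V → V → ℝ | ¬ G.Adj p.1 p.2 → w p.1 p.2 = 0} = {w | w p.1 p.2 = 0} := by
          ext w; simp [h]
        rw [this]; exact isClosed_eq (hc _ _) continuous_const
  have hsub : Kset G ⊆ Metric.closedBall 0 1 := by
    intro w hw
    rw [Metric.mem_closedBall, dist_zero_right]
    rw [pi_norm_le_iff_of_nonneg zero_le_one]
    intro u
    rw [pi_norm_le_iff_of_nonneg zero_le_one]
    intro v
    rw [Real.norm_eq_abs, abs_le]
    by_cases h : G.Adj u v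
    · have h1 := hw.1 u v h
      have h2 := hw.1 v u h.symm
      constructor <;> linarith [h1.1, h2.1, h1.2]
    · rw [hw.2 u v h]
      constructor <;> norm_num
  exact (isCompact_closedBall 0 1).of_isClosed_subset hclosed hsub

set_option maxHeartbeats 1000000 in
lemma exists_good (G : SimpleGraph V) [DecidableRel G.Adj] :
    ∃ w, IsWeakOrientation G w ∧ 2 * maxOutWeight G w ≤ mad G := by
  classical
  obtain ⟨w0, hw0, hmin⟩ := (Kset_isCompact G).exists_isMinOn (Kset_nonempty G)
      (continuous_maxOutWeight G).continuousOn
  set t := maxOutWeight G w0 with ht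
  set C : Set ℕ := {n | ∃ w ∈ Kset G, maxOutWeight G w = t ∧
      (Finset.univ.filter (fun u => outWeight G w u = t)).card = n} with hC
  have hCne : C.Nonempty := ⟨_, w0, hw0, rfl, rfl⟩
  obtain ⟨w, hwK, hwt, hcard⟩ := Nat.sInf_mem hCne
  set A := Finset.univ.filter (fun u => outWeight G w u = t) with hA
  have hle : ∀ x, outWeight G w x ≤ t := by
    intro x
    rw [← hwt]
    exact Finset.le_sup' _ (Finset.mem_univ x)
  -- key closure property
  have key : ∀ u ∈ A, ∀ v, G.Adj u v → 0 < w u v → v ∈ A := by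
    intro u hu v hadj hpos
    by_contra hv
    have hut : outWeight G w u = t := (Finset.mem_filter.1 hu).2
    have huv : u ≠ v := G.ne_of_adj hadj
    have hvlt : outWeight G w v < t :=
      lt_of_le_of_ne (hle v) (by simpa [hA] using hv)
    set ε := min (w u v) ((t - outWeight G w v)/2) with hε
    have hεpos : 0 < ε := lt_min hpos (by linarith)
    have hεle : ε ≤ w u v := min_le_left _ _
    have hεle2 : ε ≤ (t - outWeight G w v)/2 := min_le_right _ _
    set w' : V → V → ℝ := fun a b =>
      if a = u ∧ b = v then w u v - ε else if a = v ∧ b = u then w v u + ε else w a b with hw'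
    have hw'uv : w' u v = w u v - ε := by
      simp only [hw']
      simp
    have hw'vu : w' v u = w v u + ε := by
      simp only [hw']
      simp [huv]
    have hw'other : ∀ a b, ¬(a = u ∧ b = v) → ¬(a = v ∧ b = u) → w' a b = w a b := by
      intro a b h1 h2
      simp only [hw']
      rw [if_neg h1, if_neg h2]
    have hout : ∀ x, x ≠ u → x ≠ v → outWeight G w' x = outWeight G w x := by
      intro x hxu hxv
      unfold outWeight
      exact Finset.sum_congr rfl fun y _ =>
        hw'other x y (fun h => hxu h.1) (fun h => hxv h.1)
    have houtu : outWeight G w' u = outWeight G w u - ε := by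
      unfold outWeight
      have hterm : ∀ y, w' u y = w u y - (if y = v then ε else 0) := by
        intro y
        by_cases hy : y = v
        · subst hy; rw [hw'uv, if_pos rfl]
        · rw [hw'other u y (fun h => hy h.2) (fun h => huv h.1), if_neg hy, sub_zero]
      rw [Finset.sum_congr rfl (fun y _ => hterm y), Finset.sum_sub_distrib,
        Finset.sum_ite_eq' _ v (fun _ => ε), if_pos ((SimpleGraph.mem_neighborFinset G u v).2 hadj)]
    have houtv : outWeight G w' v = outWeight G w v + ε := by
      unfold outWeight
      have hterm : ∀ y, w' v y = w v y + (if y = u then ε else 0) := by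
        intro y
        by_cases hy : y = u
        · subst hy; rw [hw'vu, if_pos rfl]
        · rw [hw'other v y (fun h => huv.symm h.1) (fun h => hy h.2), if_neg hy, add_zero]
      rw [Finset.sum_congr rfl (fun y _ => hterm y), Finset.sum_add_distrib,
        Finset.sum_ite_eq' _ u (fun _ => ε),
        if_pos ((SimpleGraph.mem_neighborFinset G v u).2 hadj.symm)]
    have hw'K : w' ∈ Kset G := by
      constructor
      · intro a b hab
        by_cases h1 : a = u ∧ b = v
        · obtain ⟨rfl, rfl⟩ := h1
          rw [hw'uv, hw'vu]
          have h3 := (hwK.1 a b hab).2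
          constructor
          · linarith
          · linarith
        · by_cases h2 : a = v ∧ b = u
          · obtain ⟨rfl, rfl⟩ := h2
            rw [hw'vu, hw'uv]
            have h3 := (hwK.1 a b hab).1
            have h4 := (hwK.1 a b hab).2
            constructor
            · linarith
            · linarith
          · rw [hw'other a b h1 h2,
              hw'other b a (fun h => h2 ⟨h.2, h.1⟩) (fun h => h1 ⟨h.2, h.1⟩)]
            exact hwK.1 a b hab
      · intro a b hab
        have h1 : ¬(a = u ∧ b = v) := by rintro ⟨rfl, rfl⟩; exact hab hadj
        have h2 : ¬(a = v ∧ b = u) := by rintro ⟨rfl, rfl⟩; exact hab hadj.symm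
        rw [hw'other a b h1 h2]
        exact hwK.2 a b hab
    have hmax' : maxOutWeight G w' = t := by
      apply le_antisymm
      · apply Finset.sup'_le
        intro x _
        by_cases hx1 : x = u
        · subst hx1; rw [houtu, hut]; linarith
        · by_cases hx2 : x = v
          · subst hx2; rw [houtv]; linarith
          · rw [hout x hx1 hx2]; exact hle x
      · exact isMinOn_iff.mp hmin w' hw'K
    have hsub : (Finset.univ.filter (fun x => outWeight G w' x = t)) ⊆ A.erase u := by
      intro x hx
      have hxt := (Finset.mem_filter.1 hx).2
      by_cases hx1 : x = u
      · subst hx1; rw [houtu, hut] at hxt; exfalso; linarith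
      · by_cases hx2 : x = v
        · subst hx2; rw [houtv] at hxt; exfalso; linarith
        · rw [hout x hx1 hx2] at hxt
          exact Finset.mem_erase.2 ⟨hx1, Finset.mem_filter.2 ⟨Finset.mem_univ x, hxt⟩⟩
    have hlt : (Finset.univ.filter (fun x => outWeight G w' x = t)).card < A.card :=
      lt_of_le_of_lt (Finset.card_le_card hsub) (Finset.card_erase_lt_of_mem hu)
    have hge : A.card ≤ (Finset.univ.filter (fun x => outWeight G w' x = t)).card := by
      rw [hA, hcard]
      exact Nat.sInf_le ⟨w', hw'K, hmax', rfl⟩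
    omega
  -- counting
  have hAne : A.Nonempty := by
    obtain ⟨u, -, hu⟩ := Finset.exists_mem_eq_sup' Finset.univ_nonempty (outWeight G w)
    exact ⟨u, Finset.mem_filter.2 ⟨Finset.mem_univ u, by rw [← hu]; exact hwt⟩⟩
  set GS : SimpleGraph V :=
    { Adj := fun a b => G.Adj a b ∧ a ∈ A ∧ b ∈ A,
      symm := ⟨fun a b h => ⟨h.1.symm, h.2.2, h.2.1⟩⟩,
      loopless := ⟨fun a h => G.loopless.irrefl a h.1⟩ } with hGS
  haveI : DecidableRel GS.Adj := Classical.decRel _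
  have hGSadj : ∀ a b, GS.Adj a b ↔ (G.Adj a b ∧ a ∈ A ∧ b ∈ A) := by
    intro a b; rw [hGS]
  have hsumA : ∑ u ∈ A, outWeight G w u = ∑ p ∈ pairsF GS, w p.1 p.2 := by
    rw [sum_pairsF]
    rw [← Finset.sum_subset (Finset.subset_univ A) (fun u _ hu => Finset.sum_eq_zero
      (fun v hv => absurd (((hGSadj u v).1 (Finset.mem_filter.1 hv).2).2.1) hu))]
    apply Finset.sum_congr rfl
    intro u hu
    unfold outWeight
    rw [SimpleGraph.neighborFinset_eq_filter]
    refine (Finset.sum_subset ?_ ?_).symm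
    · intro v hv
      rw [Finset.mem_filter] at hv ⊢
      exact ⟨hv.1, ((hGSadj u v).1 hv.2).1⟩
    · intro v hv hv2
      rw [Finset.mem_filter] at hv
      rw [Finset.mem_filter] at hv2
      have hnv : v ∉ A := fun hvA =>
        hv2 ⟨hv.1, (hGSadj u v).2 ⟨hv.2, hu, hvA⟩⟩
      have h0 : ¬ 0 < w u v := fun hp => hnv (key u hu v hv.2 hp)
      have h1 := (hwK.1 u v hv.2).1
      linarith
  have hsumt : ∑ u ∈ A, outWeight G w u = (A.card : ℝ) * t := by
    rw [Finset.sum_congr rfl (fun u hu => (Finset.mem_filter.1 hu).2),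
      Finset.sum_const, nsmul_eq_mul]
  have hedge : (GS.edgeFinset.card : ℝ) = (A.card : ℝ) * t := by
    rw [← sum_pairsF_one GS w (fun u v h => (hwK.1 u v ((hGSadj u v).1 h).1).2), ← hsumA, hsumt]
  set HS : G.Subgraph :=
    { verts := ↑A,
      Adj := GS.Adj,
      adj_sub := fun h => ((hGSadj _ _).1 h).1,
      edge_vert := fun h => ((hGSadj _ _).1 h).2.1,
      symm := GS.symm } with hHS
  have hHSverts : HS.verts = ↑A := by rw [hHS]
  have hHSadj : ∀ a b, HS.Adj a b ↔ GS.Adj a b := by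
    intro a b; rw [hHS]
  have hverts : (HS.verts.ncard : ℝ) = (A.card : ℝ) := by
    rw [hHSverts]
    norm_cast
  have hEeq : HS.edgeSet = GS.edgeSet := by
    ext e
    induction e with
    | _ u v =>
      rw [SimpleGraph.mem_edgeSet, SimpleGraph.Subgraph.mem_edgeSet]
  have hecard : (HS.edgeSet.ncard : ℝ) = (GS.edgeFinset.card : ℝ) := by
    rw [hEeq, Set.ncard_eq_toFinset_card' GS.edgeSet, SimpleGraph.edgeFinset]
  have hcardpos : (0:ℝ) < (A.card : ℝ) := by exact_mod_cast hAne.card_pos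
  have hmadmem : 2 * (HS.edgeSet.ncard : ℝ) / HS.verts.ncard = 2 * t := by
    rw [hecard, hedge, hverts, mul_comm (A.card : ℝ) t, mul_div_assoc, mul_div_assoc,
      div_self (ne_of_gt hcardpos), mul_one]
  have hfinal : 2 * t ≤ mad G := by
    rw [← hmadmem]
    exact le_mad G (by rw [hHSverts]; exact Finset.coe_nonempty.mpr hAne)
  exact ⟨w, fun u v h => hwK.1 u v h, by rw [hwt]; exact hfinal⟩

end exist


/-- Every finite simple graph G with at least one vertex admits a weak
orientation w with 2·Δ_w⁺(G) ≤ mad(G); consequently the minimum of 2·Δ_w⁺(G) over all weak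
orientations w of G equals mad(G). -/
theorem stmt7 {V : Type*} [Fintype V] [Nonempty V] (G : SimpleGraph V) [DecidableRel G.Adj] :
    (∃ w : V → V → ℝ, IsWeakOrientation G w ∧ 2 * maxOutWeight G w ≤ mad G) ∧
    IsLeast { x : ℝ | ∃ w : V → V → ℝ, IsWeakOrientation G w ∧ x = 2 * maxOutWeight G w }
      (mad G) := by
  classical
  obtain ⟨w0, hw0, hle0⟩ := exists_good G
  refine ⟨⟨w0, hw0, hle0⟩, ⟨w0, hw0, le_antisymm (mad_le G hw0) hle0⟩, ?_⟩
  rintro x ⟨w, hw, rfl⟩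
  exact mad_le G hw
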